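/- Let X be a T1 regular space. The hyperspace F(X) of all nonempty finite subsets of X, equipped with the Vietoris topology, is a D_1-space if and only if X is discrete. -/

import Mathlib

open Set TopologicalSpace

universe u v

/-- The Fell topology on the collection of all subsets of `X`, generated by the subbase
consisting of the sets `U⁻ = {H | H ∩ U ≠ ∅}` for `U` open and
`(Kᶜ)⁺ = {H | H ⊆ Kᶜ}` for `K` compact. -/
def fellTopology (X : Type u) [TopologicalSpace X] : TopologicalSpace (Set X) :=
  TopologicalSpace.generateFrom
    ({S | ∃ U : Set X, IsOpen U ∧ S = {H : Set X | (H ∩ U).Nonempty}} ∪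
     {S | ∃ K : Set X, IsCompact K ∧ S = {H : Set X | H ⊆ Kᶜ}})

/-- The Vietoris topology on the collection of all subsets of `X`, generated by the subbase
consisting of the sets `U⁺ = {H | H ⊆ U}` and `U⁻ = {H | H ∩ U ≠ ∅}` for `U` open. -/
def vietorisTopology (X : Type u) [TopologicalSpace X] : TopologicalSpace (Set X) :=
  TopologicalSpace.generateFrom
    ({S | ∃ U : Set X, IsOpen U ∧ S = {H : Set X | H ⊆ U}} ∪
     {S | ∃ U : Set X, IsOpen U ∧ S = {H : Set X | (H ∩ U).Nonempty}})

/-- A collection `S` of subsets of `X`, viewed as a hyperspace with the Fell topology. -/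
def FellHyper (X : Type u) [TopologicalSpace X] (S : Set (Set X)) : Type u :=
  {A : Set X // A ∈ S}

/-- A collection `S` of subsets of `X`, viewed as a hyperspace with the Vietoris topology. -/
def VietorisHyper (X : Type u) [TopologicalSpace X] (S : Set (Set X)) : Type u :=
  {A : Set X // A ∈ S}

instance FellHyper.instTopologicalSpace (X : Type u) [TopologicalSpace X] (S : Set (Set X)) :
    TopologicalSpace (FellHyper X S) :=
  TopologicalSpace.induced (Subtype.val : {A : Set X // A ∈ S} → Set X) (fellTopology X)

instance VietorisHyper.instTopologicalSpace (X : Type u) [TopologicalSpace X] (S : Set (Set X)) :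
    TopologicalSpace (VietorisHyper X S) :=
  TopologicalSpace.induced (Subtype.val : {A : Set X // A ∈ S} → Set X) (vietorisTopology X)

/-- The underlying subset of `X` of a point of a Fell hyperspace. -/
def FellHyper.carrier {X : Type u} [TopologicalSpace X] {S : Set (Set X)}
    (A : FellHyper X S) : Set X :=
  Subtype.val A

/-- The underlying subset of `X` of a point of a Vietoris hyperspace. -/
def VietorisHyper.carrier {X : Type u} [TopologicalSpace X] {S : Set (Set X)}
    (A : VietorisHyper X S) : Set X :=
  Subtype.val A

/-- `CL(X)`: the nonempty closed subsets of `X`. -/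
def CL (X : Type u) [TopologicalSpace X] : Set (Set X) := {A | A.Nonempty ∧ IsClosed A}

/-- `𝒦(X)`: the nonempty compact subsets of `X`. -/
def Kcal (X : Type u) [TopologicalSpace X] : Set (Set X) := {A | A.Nonempty ∧ IsCompact A}

/-- `ℱ(X)`: the nonempty finite subsets of `X`. -/
def Fcal (X : Type u) : Set (Set X) := {A | A.Nonempty ∧ A.Finite}

/-- `ℱₙ(X)`: the nonempty subsets of `X` with at most `n` points. -/
def Fn (X : Type u) (n : ℕ) : Set (Set X) := {A | A.Nonempty ∧ A.encard ≤ n}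

/-- A space is a `D₁`-space if every nonempty closed subset has a countable
neighborhood base. -/
def IsD1Space (Y : Type v) [TopologicalSpace Y] : Prop :=
  ∀ F : Set Y, F.Nonempty → IsClosed F →
    ∃ B : ℕ → Set Y, (∀ n, IsOpen (B n) ∧ F ⊆ B n) ∧
      ∀ V : Set Y, IsOpen V → F ⊆ V → ∃ n, B n ⊆ V

/-- A space is a `D₀`-space if every nonempty compact subset has a countable
neighborhood base. -/
def IsD0Space (Y : Type v) [TopologicalSpace Y] : Prop :=
  ∀ F : Set Y, F.Nonempty → IsCompact F →
    ∃ B : ℕ → Set Y, (∀ n, IsOpen (B n) ∧ F ⊆ B n) ∧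
      ∀ V : Set Y, IsOpen V → F ⊆ V → ∃ n, B n ⊆ V

/-- A space has a `G_δ`-diagonal if the diagonal is a `G_δ`-set in `X × X`. -/
def HasGdeltaDiagonal (X : Type u) [TopologicalSpace X] : Prop :=
  ∃ U : ℕ → Set (X × X), (∀ n, IsOpen (U n)) ∧ (⋂ n, U n) = {p : X × X | p.1 = p.2}

/-- A space is perfect if every closed subset is a `G_δ`-set. -/
def IsPerfectSpace (Y : Type v) [TopologicalSpace Y] : Prop :=
  ∀ F : Set Y, IsClosed F → ∃ U : ℕ → Set Y, (∀ n, IsOpen (U n)) ∧ F = ⋂ n, U n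

/-- A space has the compact-`G_δ` property if every compact subset is a `G_δ`-set. -/
def CompactGDeltaProperty (Y : Type v) [TopologicalSpace Y] : Prop :=
  ∀ K : Set Y, IsCompact K → ∃ U : ℕ → Set Y, (∀ n, IsOpen (U n)) ∧ K = ⋂ n, U n

/-- `γ`-space. -/
def IsGammaSpace (Y : Type v) [TopologicalSpace Y] : Prop :=
  ∃ g : ℕ → Y → Set Y,
    (∀ n y, IsOpen (g n y) ∧ y ∈ g n y) ∧
    (∀ y, ∀ V : Set Y, IsOpen V → y ∈ V → ∃ n, g n y ⊆ V) ∧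
    (∀ n y, ∃ m, ∀ z ∈ g m y, g m z ⊆ g n y)

/-- A space has a `G_δ*`-diagonal if there is a sequence `𝒰 n` of open covers such that
`{x} = ⋂ n, closure (st(x, 𝒰 n))` for every `x`. -/
def HasGdeltaStarDiagonal (X : Type u) [TopologicalSpace X] : Prop :=
  ∃ 𝒰 : ℕ → Set (Set X),
    (∀ n, ∀ U ∈ 𝒰 n, IsOpen U) ∧ (∀ n, ⋃₀ 𝒰 n = univ) ∧
    ∀ x : X, (⋂ n, closure (⋃₀ {U ∈ 𝒰 n | x ∈ U})) = {x}


section Statement6Aux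

variable {X : Type u} [TopologicalSpace X]

/-- The subbasis of the Vietoris topology. -/
private def vsub6 (X : Type u) [TopologicalSpace X] : Set (Set (Set X)) :=
  ({S | ∃ U : Set X, IsOpen U ∧ S = {H : Set X | H ⊆ U}} ∪
   {S | ∃ U : Set X, IsOpen U ∧ S = {H : Set X | (H ∩ U).Nonempty}})

private lemma vietoris_eq6 : vietorisTopology X = TopologicalSpace.generateFrom (vsub6 X) := rfl

private lemma upper_open6 {U : Set X} (hU : IsOpen U) :
    @IsOpen _ (vietorisTopology X) {H : Set X | H ⊆ U} :=
  TopologicalSpace.GenerateOpen.basic _ (Or.inl ⟨U, hU, rfl⟩)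

private lemma lower_open6 {U : Set X} (hU : IsOpen U) :
    @IsOpen _ (vietorisTopology X) {H : Set X | (H ∩ U).Nonempty} :=
  TopologicalSpace.GenerateOpen.basic _ (Or.inr ⟨U, hU, rfl⟩)

private lemma hyperOpen_of6 {W : Set (Set X)} (hW : @IsOpen _ (vietorisTopology X) W) :
    IsOpen (Subtype.val ⁻¹' W : Set (VietorisHyper X (Fcal X))) :=
  ⟨W, hW, rfl⟩

private lemma hyperOpen_iff6 {O : Set (VietorisHyper X (Fcal X))} :
    IsOpen O ↔ ∃ W, @IsOpen _ (vietorisTopology X) W ∧ Subtype.val ⁻¹' W = O :=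
  Iff.rfl

private lemma key_nbhd6 {W : Set (Set X)} (hW : TopologicalSpace.GenerateOpen (vsub6 X) W)
    (x : X) (S : Set X) (hmem : insert x S ∈ W) :
    ∃ G : Set X, IsOpen G ∧ x ∈ G ∧ ∀ p ∈ G, insert p S ∈ W := by
  induction hW generalizing S with
  | @basic t ht =>
    rcases ht with ⟨U, hU, rfl⟩ | ⟨U, hU, rfl⟩
    · exact ⟨U, hU, hmem (mem_insert _ _),
        fun p hp => insert_subset hp ((subset_insert _ _).trans hmem)⟩
    · rcases hmem with ⟨q, hq, hqU⟩
      rcases mem_insert_iff.1 hq with rfl | hqS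
      · exact ⟨U, hU, hqU, fun p hp => ⟨p, mem_insert _ _, hp⟩⟩
      · exact ⟨univ, isOpen_univ, mem_univ _, fun p _ => ⟨q, Or.inr hqS, hqU⟩⟩
  | univ => exact ⟨univ, isOpen_univ, mem_univ _, fun p _ => mem_univ _⟩
  | inter u v hu hv ihu ihv =>
    obtain ⟨G1, hG1, hxG1, h1⟩ := ihu S hmem.1
    obtain ⟨G2, hG2, hxG2, h2⟩ := ihv S hmem.2
    exact ⟨G1 ∩ G2, hG1.inter hG2, ⟨hxG1, hxG2⟩, fun p hp => ⟨h1 p hp.1, h2 p hp.2⟩⟩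
  | sUnion T hT ih =>
    obtain ⟨t, htT, hmt⟩ := hmem
    obtain ⟨G, hG, hxG, h⟩ := ih t htT S hmt
    exact ⟨G, hG, hxG, fun p hp => ⟨t, htT, h p hp⟩⟩

private lemma backward6 [DiscreteTopology X] : IsD1Space (VietorisHyper X (Fcal X)) := by
  have hsingle : ∀ A : VietorisHyper X (Fcal X), IsOpen ({A} : Set (VietorisHyper X (Fcal X))) := by
    intro A
    obtain ⟨hne, hfin⟩ := A.2
    have heq : ({A} : Set (VietorisHyper X (Fcal X))) =
        Subtype.val ⁻¹' ({H : Set X | H ⊆ A.1} ∩ ⋂ a ∈ A.1, {H : Set X | (H ∩ {a}).Nonempty}) := by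
      ext A'
      show A' = A ↔ A'.1 ∈ ({H : Set X | H ⊆ A.1} ∩ ⋂ a ∈ A.1, {H : Set X | (H ∩ {a}).Nonempty})
      simp only [mem_singleton_iff, mem_preimage, mem_inter_iff, mem_iInter, mem_setOf_eq]
      constructor
      · rintro rfl
        exact ⟨subset_rfl, fun a ha => ⟨a, ha, rfl⟩⟩
      · rintro ⟨h1, h2⟩
        apply Subtype.ext
        refine subset_antisymm h1 fun a ha => ?_
        obtain ⟨y, hy1, hy2⟩ := h2 a ha
        rwa [mem_singleton_iff.1 hy2] at hy1
    rw [heq]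
    refine hyperOpen_of6 ?_
    letI := vietorisTopology X
    exact (upper_open6 (isOpen_discrete _)).inter
      (hfin.isOpen_biInter fun a _ => lower_open6 (isOpen_discrete _))
  have hopen : ∀ O : Set (VietorisHyper X (Fcal X)), IsOpen O := by
    intro O
    have : O = ⋃ A ∈ O, {A} := (Set.biUnion_of_singleton O).symm
    rw [this]
    exact isOpen_biUnion fun A _ => hsingle A
  intro F _hne _hcl
  exact ⟨fun _ => F, fun n => ⟨hopen F, subset_rfl⟩, fun V _hV hFV => ⟨0, hFV⟩⟩

private lemma forward6 [T1Space X] [RegularSpace X]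
    (hD : IsD1Space (VietorisHyper X (Fcal X))) (x : X) : IsOpen ({x} : Set X) := by
  classical
  by_contra hx
  -- non-isolation
  have hni : ∀ U : Set X, IsOpen U → x ∈ U → ∃ y, y ∈ U ∧ y ≠ x := by
    intro U hU hxU
    by_contra h
    push_neg at h
    have : U = {x} := subset_antisymm (fun y hy => h y hy) (by simpa using hxU)
    exact hx (this ▸ hU)
  have hpick : ∀ O : Set X, IsOpen O → x ∈ O → ∀ F : Set X, F.Finite →
      ∃ y, y ∈ O ∧ y ∉ F ∧ y ≠ x := by
    intro O hO hxO F hF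
    have hO' : IsOpen (O \ (F \ {x})) := hO.sdiff (hF.diff (t := {x})).isClosed
    have hx' : x ∈ O \ (F \ {x}) := ⟨hxO, fun h => h.2 rfl⟩
    obtain ⟨y, hy, hyx⟩ := hni _ hO' hx'
    exact ⟨y, hy.1, fun hyF => hy.2 ⟨hyF, hyx⟩, hyx⟩
  -- the closed set of finite sets containing x
  set C : Set (VietorisHyper X (Fcal X)) := {A | x ∈ A.1} with hCdef
  have hCclosed : IsClosed C := by
    have h1 : IsOpen (Subtype.val ⁻¹' {H : Set X | H ⊆ ({x}ᶜ : Set X)} :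
        Set (VietorisHyper X (Fcal X))) := hyperOpen_of6 (upper_open6 isOpen_compl_singleton)
    have h2 : C = (Subtype.val ⁻¹' {H : Set X | H ⊆ ({x}ᶜ : Set X)})ᶜ := by
      ext A
      change x ∈ A.1 ↔ ¬ (A.1 ⊆ ({x}ᶜ : Set X))
      simp [Set.subset_compl_singleton_iff]
    rw [h2]
    exact h1.isClosed_compl
  have hCne : C.Nonempty :=
    ⟨⟨{x}, ⟨singleton_nonempty x, finite_singleton x⟩⟩, mem_singleton x⟩
  obtain ⟨B, hB, hbase⟩ := hD C hCne hCclosed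
  have hWex : ∀ n, ∃ W, @IsOpen _ (vietorisTopology X) W ∧ Subtype.val ⁻¹' W = B n :=
    fun n => hyperOpen_iff6.1 (hB n).1
  choose W hWopen hWeq using hWex
  have hSW : ∀ n (S : Set X), S.Finite → insert x S ∈ W n := by
    intro n S hS
    have hA : (⟨insert x S, ⟨⟨x, mem_insert _ _⟩, hS.insert x⟩⟩ : VietorisHyper X (Fcal X)) ∈ B n :=
      (hB n).2 (mem_insert _ _)
    rw [← hWeq n] at hA
    exact hA
  have hGex : ∀ n (S : Set X), S.Finite →
      ∃ G, IsOpen G ∧ x ∈ G ∧ ∀ p ∈ G, insert p S ∈ W n :=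
    fun n S hS => key_nbhd6 (hWopen n) x S (hSW n S hS)
  choose G hGopen hGx hGmem using hGex
  set U : ℕ → Set X := fun n => G n ∅ finite_empty with hUdef
  -- the U n form a neighborhood base at x
  have hUopen : ∀ n, IsOpen (U n) := fun n => hGopen n ∅ finite_empty
  have hUx : ∀ n, x ∈ U n := fun n => hGx n ∅ finite_empty
  have hUbase : ∀ G' : Set X, IsOpen G' → x ∈ G' → ∃ n, U n ⊆ G' := by
    intro G' hG' hxG'
    have hVo : IsOpen (Subtype.val ⁻¹' {H : Set X | (H ∩ G').Nonempty} :
        Set (VietorisHyper X (Fcal X))) := hyperOpen_of6 (lower_open6 hG')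
    obtain ⟨n, hn⟩ := hbase _ hVo (fun A hA => ⟨x, hA, hxG'⟩)
    refine ⟨n, fun p hp => ?_⟩
    have h1 : ({p} : Set X) ∈ W n := by
      have := hGmem n ∅ finite_empty p hp
      simpa using this
    have h2 : (⟨{p}, ⟨singleton_nonempty p, finite_singleton p⟩⟩ : VietorisHyper X (Fcal X)) ∈ B n := by
      rw [← hWeq n]; exact h1
    obtain ⟨q, hq1, hq2⟩ := hn h2
    rwa [mem_singleton_iff.1 hq1] at hq2
  -- build a discrete sequence converging to x
  have hIo : ∀ n : ℕ, IsOpen (⋂ i ∈ Finset.range (n+1), U i) :=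
    fun n => isOpen_biInter_finset fun i _ => hUopen i
  have hIx : ∀ n : ℕ, x ∈ ⋂ i ∈ Finset.range (n+1), U i :=
    fun n => Set.mem_iInter₂.2 fun i _ => hUx i
  have hch : ∀ (n : ℕ) (F : Set X), F.Finite →
      ∃ y, y ∈ (⋂ i ∈ Finset.range (n+1), U i) ∧ y ∉ F ∧ y ≠ x :=
    fun n F hF => hpick _ (hIo n) (hIx n) F hF
  choose pick hpick1 hpick2 hpick3 using hch
  let L : ℕ → {F : Set X // F.Finite} := fun n =>
    Nat.rec ⟨∅, finite_empty⟩ (fun k Fk => ⟨insert (pick k Fk.1 Fk.2) Fk.1, Fk.2.insert _⟩) n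
  set xs : ℕ → X := fun n => pick n (L n).1 (L n).2 with hxsdef
  have hLsucc : ∀ n, (L (n+1)).1 = insert (xs n) (L n).1 := fun n => rfl
  have hLmono : ∀ m n, m ≤ n → (L m).1 ⊆ (L n).1 := by
    intro m n h
    induction n with
    | zero => simp_all
    | succ k ih =>
      rcases Nat.lt_or_ge m (k+1) with h' | h'
      · exact (ih (Nat.lt_succ_iff.1 h')).trans (by rw [hLsucc]; exact subset_insert _ _)
      · have : m = k + 1 := le_antisymm h h'
        subst this; exact subset_rfl
  have hmemL : ∀ j n, j < n → xs j ∈ (L n).1 := by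
    intro j n h
    exact hLmono (j+1) n h (by rw [hLsucc]; exact mem_insert _ _)
  have hxsne : ∀ j n, j < n → xs j ≠ xs n := by
    intro j n h heq
    have h1 := hmemL j n h
    rw [heq] at h1
    exact hpick2 n (L n).1 (L n).2 (by simpa only [hxsdef] using h1)
  have hxsinj : Function.Injective xs := by
    intro a b hab
    rcases lt_trichotomy a b with h | h | h
    · exact absurd hab (hxsne a b h)
    · exact h
    · exact absurd hab.symm (hxsne b a h)
  have hxsx : ∀ n, xs n ≠ x := fun n => hpick3 n (L n).1 (L n).2
  have hxsU : ∀ i n, i ≤ n → xs n ∈ U i := by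
    intro i n h
    have h1 := hpick1 n (L n).1 (L n).2
    have h2 : xs n ∈ ⋂ i ∈ Finset.range (n+1), U i := by simpa only [hxsdef] using h1
    exact Set.mem_iInter₂.1 h2 i (Finset.mem_range.2 (Nat.lt_succ_of_le h))
  -- separation from the sequence
  have hsep : ∀ z : X, z ≠ x → ∃ O, IsOpen O ∧ z ∈ O ∧
      ∀ w ∈ O, (w = x ∨ ∃ k, xs k = w) → w = z := by
    intro z hz
    obtain ⟨u, v, hu, hv, hzu, hxv, huv⟩ := t2_separation hz
    obtain ⟨n0, hn0⟩ := hUbase v hv hxv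
    refine ⟨u \ ((xs '' {k | k < n0}) \ {z}), hu.sdiff (((Set.finite_Iio n0).image xs).diff (t := {z})).isClosed,
      ⟨hzu, fun h => h.2 rfl⟩, ?_⟩
    rintro w ⟨hwu, hw2⟩ (rfl | ⟨k, rfl⟩)
    · exact absurd hxv (Set.disjoint_left.1 huv hwu)
    · rcases Nat.lt_or_ge k n0 with hk | hk
      · by_contra hne
        exact hw2 ⟨⟨k, by exact hk, rfl⟩, hne⟩
      · exact absurd (hn0 (hxsU n0 k hk)) (Set.disjoint_left.1 huv hwu)
  have hEclosed : IsClosed (insert x (Set.range xs)) := by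
    rw [← isOpen_compl_iff]
    rw [isOpen_iff_forall_mem_open]
    intro z hz
    simp only [mem_compl_iff, mem_insert_iff, mem_range, not_or, not_exists] at hz
    obtain ⟨O, hO, hzO, hOsep⟩ := hsep z hz.1
    refine ⟨O, fun w hw hwE => ?_, hO, hzO⟩
    simp only [mem_insert_iff, mem_range] at hwE
    have := hOsep w hw (hwE.imp id (fun ⟨k, hk⟩ => ⟨k, hk⟩))
    subst this
    rcases hwE with h | ⟨k, hk⟩
    · exact hz.1 h
    · exact hz.2 k hk
  choose Wk hWkopen hWkmem hWksep using fun k => hsep (xs k) (hxsx k)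
  -- φ
  set idx : X → ℕ := fun z => if h : ∃ k, xs k = z then Nat.find h else 0 with hidxdef
  have hidxspec : ∀ z : X, (∃ k, xs k = z) → xs (idx z) = z := by
    intro z h
    simp only [hidxdef]
    rw [dif_pos h]
    exact Nat.find_spec h
  set phi : X → Set X := fun z =>
    if ∃ k, xs k = z then Wk (idx z) else (insert x (Set.range xs))ᶜ
    with hphidef
  have hphiopen : ∀ z, IsOpen (phi z) := by
    intro z
    simp only [hphidef]
    split
    · exact hWkopen _
    · exact hEclosed.isOpen_compl
  have hphiself : ∀ z, z ≠ x → z ∈ phi z := by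
    intro z hz
    simp only [hphidef]
    split
    case isTrue h =>
      have h2 := hWkmem (idx z)
      rw [hidxspec z h] at h2
      exact h2
    case isFalse h =>
      intro hc
      rcases mem_insert_iff.1 hc with hc' | hc'
      · exact hz hc'
      · obtain ⟨k, hk⟩ := hc'
        exact h ⟨k, hk⟩
  have hphidetect : ∀ z k, z ≠ x → xs k ∈ phi z → z = xs k := by
    intro z k hz hmem
    simp only [hphidef] at hmem
    split at hmem
    case isTrue h =>
      have h1 := hWksep (idx z) (xs k) hmem (Or.inr ⟨k, rfl⟩)
      exact ((h1.trans (hidxspec z h)).symm)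
    case isFalse h =>
      refine absurd ?_ hmem
      exact mem_insert_iff.2 (Or.inr ⟨k, rfl⟩)
  -- the level function
  have hfind : ∀ S : Set X, S.Finite → ∃ i, xs i ∉ S := by
    intro S hS
    by_contra h
    push_neg at h
    exact (Set.infinite_range_of_injective hxsinj) (hS.subset (range_subset_iff.mpr h))
  have hlevex : ∀ S : Set X, ∃ l : ℕ, (S.Finite → xs l ∉ S) ∧ ∀ i < l, xs i ∈ S := by
    intro S
    by_cases h : ∃ i, xs i ∉ S
    · exact ⟨Nat.find h, fun _ => Nat.find_spec h, fun i hi => not_not.1 (Nat.find_min h hi)⟩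
    · push_neg at h
      refine ⟨0, fun hS => ?_, fun i hi => absurd hi (Nat.not_lt_zero i)⟩
      obtain ⟨i, hi⟩ := hfind S hS
      exact absurd (h i) hi
  choose lev hlev1 hlev2 using hlevex
  -- chains and diagonal points
  set Cs : ℕ → Set X := fun n => xs '' {j | j < n} with hCsdef
  have hCsfin : ∀ n, (Cs n).Finite := fun n => (Set.finite_Iio n).image xs
  choose t htG htx using fun n => hni _ (hGopen n (Cs n) (hCsfin n)) (hGx n (Cs n) (hCsfin n))
  have hKW : ∀ n, insert (t n) (Cs n) ∈ W n := fun n => hGmem n (Cs n) (hCsfin n) (t n) (htG n)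
  -- ψ
  set psi : Set X → Set X := fun S => ((xs '' {i | i ≤ lev S}) ∪ (t '' {m | m ≤ lev S}))ᶜ
    with hpsidef
  have hpsiopen : ∀ S, IsOpen (psi S) :=
    fun S => (((Set.finite_Iic (lev S)).image xs).union ((Set.finite_Iic (lev S)).image t)).isClosed.isOpen_compl
  have hxpsi : ∀ S, x ∈ psi S := by
    intro S
    simp only [hpsidef]
    intro hc
    rcases (Set.mem_union _ _ _).1 hc with hc' | hc'
    · obtain ⟨i, _, hi⟩ := hc'
      exact hxsx i hi
    · obtain ⟨m, _, hm⟩ := hc'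
      exact htx m hm
  -- the diagonal open set V
  set Wv : Set (Set X) := {H | ∃ S : Set X, S.Finite ∧ x ∉ S ∧
      H ⊆ (⋃ s ∈ S, phi s) ∪ psi S ∧ (∀ s ∈ S, (H ∩ phi s).Nonempty) ∧ (H ∩ psi S).Nonempty}
    with hWvdef
  have hWvopen : @IsOpen _ (vietorisTopology X) Wv := by
    letI := vietorisTopology X
    have : Wv = ⋃ S : Set X, ⋃ (_ : S.Finite ∧ x ∉ S),
        ({H : Set X | H ⊆ (⋃ s ∈ S, phi s) ∪ psi S} ∩
         ((⋂ s ∈ S, {H : Set X | (H ∩ phi s).Nonempty}) ∩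
          {H : Set X | (H ∩ psi S).Nonempty})) := by
      ext H
      simp only [hWvdef, mem_setOf_eq, mem_iUnion, mem_inter_iff, mem_iInter]
      constructor
      · rintro ⟨S, h1, h2, h3, h4, h5⟩; exact ⟨S, ⟨h1, h2⟩, h3, h4, h5⟩
      · rintro ⟨S, ⟨h1, h2⟩, h3, h4, h5⟩; exact ⟨S, h1, h2, h3, h4, h5⟩
    rw [this]
    refine isOpen_iUnion fun S => isOpen_iUnion fun hS => ?_
    refine (upper_open6 ?_).inter (((hS.1.isOpen_biInter fun s _ => lower_open6 (hphiopen s))).inter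
      (lower_open6 (hpsiopen S)))
    exact (isOpen_biUnion fun s _ => hphiopen s).union (hpsiopen S)
  set V : Set (VietorisHyper X (Fcal X)) := Subtype.val ⁻¹' Wv with hVdef
  have hVopen : IsOpen V := hyperOpen_of6 hWvopen
  have hCV : C ⊆ V := by
    intro A hA
    refine ⟨A.1 \ {x}, A.2.2.diff (t := {x}), fun h => h.2 rfl, ?_, ?_, ⟨x, hA, hxpsi _⟩⟩
    · intro a ha
      by_cases hax : a = x
      · exact Or.inr (by rw [hax]; exact hxpsi _)
      · exact Or.inl (mem_biUnion ⟨ha, hax⟩ (hphiself a hax))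
    · rintro s ⟨hs1, hs2⟩
      exact ⟨s, hs1, hphiself s hs2⟩
  -- K n is in B n but not in V
  have hKV : ∀ n, insert (t n) (Cs n) ∉ Wv := by
    rintro n ⟨S, hSfin, hxS, hcov, hhit, hpsiS⟩
    rcases le_or_gt n (lev S) with hn | hn
    · obtain ⟨y, hyK, hyP⟩ := hpsiS
      apply hyP
      rcases mem_insert_iff.1 hyK with rfl | hyC
      · exact Or.inr ⟨n, by exact hn, rfl⟩
      · obtain ⟨j, hj, rfl⟩ := hyC
        exact Or.inl ⟨j, by exact le_trans (le_of_lt hj) hn, rfl⟩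
    · have hzK : xs (lev S) ∈ insert (t n) (Cs n) :=
        Or.inr ⟨lev S, by exact hn, rfl⟩
      rcases hcov hzK with hz1 | hz2
      · obtain ⟨s, hsS, hzs⟩ := mem_iUnion₂.1 hz1
        have hsx : s ≠ x := fun h => hxS (h ▸ hsS)
        have : s = xs (lev S) := hphidetect s (lev S) hsx hzs
        exact hlev1 S hSfin (this ▸ hsS)
      · have h4 : xs (lev S) ∈ (xs '' {i | i ≤ lev S} ∪ t '' {m | m ≤ lev S}) :=
          by
          have hmemi : lev S ∈ {i : ℕ | i ≤ lev S} := by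
            rw [Set.mem_setOf_eq]
          exact Set.mem_union_left _ ⟨lev S, hmemi, rfl⟩
        have h5 : xs (lev S) ∉ (xs '' {i | i ≤ lev S} ∪ t '' {m | m ≤ lev S}) := by
          simpa only [hpsidef, Set.mem_compl_iff] using hz2
        exact absurd h4 h5
  obtain ⟨n, hn⟩ := hbase V hVopen hCV
  have hKB : (⟨insert (t n) (Cs n), ⟨⟨t n, mem_insert _ _⟩, (hCsfin n).insert _⟩⟩ :
      VietorisHyper X (Fcal X)) ∈ B n := by
    rw [← hWeq n]; exact hKW n
  exact hKV n (hn hKB)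

end Statement6Aux

/-- `ℱ(X)` with the Vietoris topology is a `D₁`-space iff `X` is discrete. -/
theorem statement6 (X : Type u) [TopologicalSpace X] [T1Space X] [RegularSpace X] :
    IsD1Space (VietorisHyper X (Fcal X)) ↔ DiscreteTopology X := by
  constructor
  · intro h
    exact discreteTopology_iff_isOpen_singleton.mpr fun a => forward6 h a
  · intro h
    exact backward6
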